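/- Let d ∈ ℕ*, f_0,…,f_{d-1} ≥ 0, f_d = 0, g_1,…,g_d ≥ 0 with f_i + g_i > 0 for i = 1,…,d, let x_0 > 0, and set p_i = Π_{j=0}^{i-1} f_j/(f_{j+1}+g_{j+1}). Define the measure f̄ on ℕ^d by f̄(x_1,…,x_d) = Π_{i=1}^d (p_i x_0)^{x_i} e^{-p_i x_0} / x_i! (product of Poisson laws with means p_i x_0), and the generator Ā_{x_0} acting on bounded ψ : ℕ^d → ℝ by Ā_{x_0} ψ(x) = f_0 x_0 [ψ(x+e_1) - ψ(x)] + Σ_{i=1}^d f_i x_i [ψ(x - e_i + e_{i+1}) - ψ(x)] + Σ_{i=1}^d g_i x_i [ψ(x - e_i) - ψ(x)], where e_i is the i-th standard basis vector of ℕ^d and e_{d+1} = 0. Then for every bounded ψ : ℕ^d → ℝ, the series Σ_{x ∈ ℕ^d} Ā_{x_0} ψ(x) f̄(x) converges absolutely and equals 0. -/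

import Mathlib

set_option autoImplicit false

open scoped BigOperators

/-- Add one follicle in compartment `i` (configuration `x + eᵢ`). -/
def addOne {d : ℕ} (x : Fin d → ℕ) (i : Fin d) : Fin d → ℕ :=
  Function.update x i (x i + 1)

/-- Remove one follicle from compartment `i` (configuration `x - eᵢ`). -/
def removeOne {d : ℕ} (x : Fin d → ℕ) (i : Fin d) : Fin d → ℕ :=
  Function.update x i (x i - 1)

/-- Move one follicle from compartment `i` to compartment `i+1`
(configuration `x - eᵢ + eᵢ₊₁`, with `e_{d+1} = 0`). -/
def moveOne {d : ℕ} (x : Fin d → ℕ) (i : Fin d) : Fin d → ℕ :=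
  if h : (i : ℕ) + 1 < d then addOne (removeOne x i) ⟨(i : ℕ) + 1, h⟩
  else removeOne x i

/-- The generator `Ā_{x₀}` of the fast growing-follicle chain, frozen slow variable `x₀`,
applied to a function `ψ` at the configuration `x`. -/
noncomputable def genApply {d : ℕ} [NeZero d] (f g : ℕ → ℝ) (f0 x0 : ℝ)
    (ψ : (Fin d → ℕ) → ℝ) (x : Fin d → ℕ) : ℝ :=
  f0 * x0 * (ψ (addOne x 0) - ψ x)
    + ∑ i : Fin d, f ((i : ℕ) + 1) * (x i : ℝ) * (ψ (moveOne x i) - ψ x)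
    + ∑ i : Fin d, g ((i : ℕ) + 1) * (x i : ℝ) * (ψ (removeOne x i) - ψ x)

/-- The product of Poisson laws with means `pᵢ x₀`. -/
noncomputable def poissonProd {d : ℕ} (p : Fin d → ℝ) (x0 : ℝ) (x : Fin d → ℕ) : ℝ :=
  ∏ i : Fin d, (p i * x0) ^ (x i) * Real.exp (-(p i * x0)) / (Nat.factorial (x i))

set_option maxHeartbeats 1000000

namespace Stmt14Aux

/-- A single Poisson factor. -/
noncomputable def pf (lam : ℝ) (n : ℕ) : ℝ := lam ^ n * Real.exp (-lam) / (Nat.factorial n)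

lemma poissonProd_eq {d : ℕ} (p : Fin d → ℝ) (x0 : ℝ) (x : Fin d → ℕ) :
    poissonProd p x0 x = ∏ i : Fin d, pf (p i * x0) (x i) := rfl

lemma pf_nonneg {lam : ℝ} (h : 0 ≤ lam) (n : ℕ) : 0 ≤ pf lam n :=
  div_nonneg (mul_nonneg (pow_nonneg h _) (Real.exp_pos _).le) (Nat.cast_nonneg _)

lemma pf_summable (lam : ℝ) : Summable (pf lam) := by
  have := (Real.summable_pow_div_factorial lam).mul_right (Real.exp (-lam))
  exact this.congr fun n => by unfold pf; ring

lemma pf_succ (lam : ℝ) (n : ℕ) : ((n : ℝ) + 1) * pf lam (n + 1) = lam * pf lam n := by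
  unfold pf
  have hn : ((Nat.factorial n : ℕ) : ℝ) ≠ 0 := Nat.cast_ne_zero.2 (Nat.factorial_ne_zero n)
  have hn1 : ((n : ℝ) + 1) ≠ 0 := by positivity
  rw [pow_succ, Nat.factorial_succ]
  push_cast
  field_simp

lemma addOne_injective {d : ℕ} (i : Fin d) :
    Function.Injective (fun x : Fin d → ℕ => addOne x i) := by
  intro a b h
  funext j
  by_cases hj : j = i
  · subst hj
    have := congrFun h j
    simpa [addOne] using this
  · have := congrFun h j
    simpa [addOne, Function.update_of_ne hj] using this

lemma removeOne_addOne {d : ℕ} (x : Fin d → ℕ) (i : Fin d) : removeOne (addOne x i) i = x := by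
  funext j
  by_cases hj : j = i
  · subst hj; simp [removeOne, addOne]
  · simp [removeOne, addOne, Function.update_of_ne hj]

lemma addOne_removeOne {d : ℕ} (x : Fin d → ℕ) (i : Fin d) (hx : x i ≠ 0) :
    addOne (removeOne x i) i = x := by
  funext j
  by_cases hj : j = i
  · subst hj; simp [removeOne, addOne]; omega
  · simp [removeOne, addOne, Function.update_of_ne hj]

lemma poissonProd_addOne {d : ℕ} (p : Fin d → ℝ) (x0 : ℝ) (y : Fin d → ℕ) (i : Fin d) :
    ((y i : ℝ) + 1) * poissonProd p x0 (addOne y i) = (p i * x0) * poissonProd p x0 y := by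
  have hxi : addOne y i i = y i + 1 := by simp [addOne]
  have hrest : ∀ j ∈ Finset.univ.erase i,
      pf (p j * x0) (addOne y i j) = pf (p j * x0) (y j) := by
    intro j hj
    have hji : j ≠ i := Finset.ne_of_mem_erase hj
    simp [addOne, Function.update_of_ne hji]
  rw [poissonProd_eq, poissonProd_eq,
    ← Finset.mul_prod_erase Finset.univ _ (Finset.mem_univ i),
    ← Finset.mul_prod_erase Finset.univ (fun j => pf (p j * x0) (y j)) (Finset.mem_univ i),
    Finset.prod_congr rfl hrest, hxi, ← mul_assoc, pf_succ, mul_assoc]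

lemma summable_pi_prod : ∀ {d : ℕ} (Q : Fin d → ℕ → ℝ), (∀ j n, 0 ≤ Q j n) →
    (∀ j, Summable (Q j)) → Summable (fun x : Fin d → ℕ => ∏ j, Q j (x j)) := by
  intro d
  induction d with
  | zero =>
      intro Q _ _
      exact .of_finite
  | succ n ih =>
      intro Q hQ0 hQs
      have hg : Summable (fun y : Fin n → ℕ => ∏ j : Fin n, Q j.succ (y j)) :=
        ih (fun j => Q j.succ) (fun j m => hQ0 _ _) (fun j => hQs _)
      have hf0 : (0 : ℕ → ℝ) ≤ Q 0 := fun m => hQ0 0 m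
      have hg0 : (0 : (Fin n → ℕ) → ℝ) ≤ fun y : Fin n → ℕ => ∏ j : Fin n, Q j.succ (y j) :=
        fun y => Finset.prod_nonneg fun j _ => hQ0 _ _
      have h1 := Summable.mul_of_nonneg (f := Q 0)
        (g := fun y : Fin n → ℕ => ∏ j : Fin n, Q j.succ (y j)) (hQs 0) hg hf0 hg0
      have hco : (fun x : Fin (n + 1) → ℕ => ∏ j, Q j (x j)) ∘ (Fin.consEquiv (fun _ => ℕ)) =
          fun ab : ℕ × (Fin n → ℕ) => Q 0 ab.1 * ∏ j : Fin n, Q j.succ (ab.2 j) := by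
        funext ab
        simp [Fin.consEquiv, Fin.prod_univ_succ]
      exact (Fin.consEquiv (fun _ => ℕ)).summable_iff.mp (by rw [hco]; exact h1)

lemma summable_bdd_mul {α : Type*} {b : α → ℝ} (hb : Summable b) (h0 : ∀ x, 0 ≤ b x)
    {F : α → ℝ} {C : ℝ} (hF : ∀ x, |F x| ≤ C) : Summable (fun x => b x * F x) := by
  refine Summable.of_norm_bounded (hb.mul_right C) (fun x => ?_)
  calc ‖b x * F x‖ = b x * |F x| := by
        rw [Real.norm_eq_abs, abs_mul, abs_of_nonneg (h0 x)]
    _ ≤ b x * C := mul_le_mul_of_nonneg_left (hF x) (h0 x)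

lemma transfer {d : ℕ} (p : Fin d → ℝ) (x0 : ℝ) (i : Fin d) (F : (Fin d → ℕ) → ℝ)
    (hsum : Summable (fun y : Fin d → ℕ => poissonProd p x0 y * F y)) :
    Summable (fun x : Fin d → ℕ => (x i : ℝ) * poissonProd p x0 x * F (removeOne x i)) ∧
    ∑' x : Fin d → ℕ, (x i : ℝ) * poissonProd p x0 x * F (removeOne x i)
      = (p i * x0) * ∑' y : Fin d → ℕ, poissonProd p x0 y * F y := by
  set h : (Fin d → ℕ) → ℝ :=
    fun x => (x i : ℝ) * poissonProd p x0 x * F (removeOne x i) with hh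
  have hcomp : ∀ y, h (addOne y i) = (p i * x0) * (poissonProd p x0 y * F y) := by
    intro y
    have h1 : addOne y i i = y i + 1 := by simp [addOne]
    have h2 := poissonProd_addOne p x0 y i
    rw [hh]
    simp only [h1, removeOne_addOne]
    push_cast
    rw [mul_assoc, ← mul_assoc ((y i : ℝ) + 1), h2, mul_assoc]
  have hrange : ∀ x ∉ Set.range (fun y : Fin d → ℕ => addOne y i), h x = 0 := by
    intro x hx
    have hxi : x i = 0 := by
      by_contra h0
      exact hx ⟨removeOne x i, addOne_removeOne x i h0⟩
    simp [hh, hxi]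
  have hinj := addOne_injective (d := d) i
  have hcompf : (h ∘ fun y : Fin d → ℕ => addOne y i)
      = fun y => (p i * x0) * (poissonProd p x0 y * F y) := funext hcomp
  constructor
  · refine (hinj.summable_iff hrange).mp ?_
    rw [hcompf]
    exact hsum.mul_left _
  · have hsupp : Function.support h ⊆ Set.range (fun y : Fin d → ℕ => addOne y i) := by
      intro x hx
      by_contra hr
      exact hx (hrange x hr)
    have ht := hinj.tsum_eq (f := h) hsupp
    rw [← ht]
    calc ∑' y, h (addOne y i) = ∑' y, (p i * x0) * (poissonProd p x0 y * F y) :=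
          tsum_congr hcomp
      _ = (p i * x0) * ∑' y, poissonProd p x0 y * F y := tsum_mul_left

lemma tsum_structure {α ι : Type*} [Fintype ι]
    (a b : α → ℝ) (u v w z : ι → α → ℝ)
    (ha : Summable a) (hb : Summable b)
    (hu : ∀ i, Summable (u i)) (hv : ∀ i, Summable (v i))
    (hw : ∀ i, Summable (w i)) (hz : ∀ i, Summable (z i)) :
    Summable (fun x => (a x - b x) + (∑ i, (u i x - v i x)) + (∑ i, (w i x - z i x))) ∧
    ∑' x, ((a x - b x) + (∑ i, (u i x - v i x)) + (∑ i, (w i x - z i x)))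
      = ((∑' x, a x) - ∑' x, b x) + (∑ i, ((∑' x, u i x) - ∑' x, v i x))
        + (∑ i, ((∑' x, w i x) - ∑' x, z i x)) := by
  have huv : ∀ i : ι, Summable (fun x => u i x - v i x) := fun i => (hu i).sub (hv i)
  have hwz : ∀ i : ι, Summable (fun x => w i x - z i x) := fun i => (hw i).sub (hz i)
  have hsuv : Summable (fun x => ∑ i, (u i x - v i x)) := summable_sum fun i _ => huv i
  have hswz : Summable (fun x => ∑ i, (w i x - z i x)) := summable_sum fun i _ => hwz i
  refine ⟨((ha.sub hb).add hsuv).add hswz, ?_⟩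
  rw [Summable.tsum_add ((ha.sub hb).add hsuv) hswz, Summable.tsum_add (ha.sub hb) hsuv,
    Summable.tsum_sub ha hb, Summable.tsum_finsetSum (fun i _ => huv i), Summable.tsum_finsetSum (fun i _ => hwz i)]
  congr 1
  · congr 1
    exact Finset.sum_congr rfl fun i _ => Summable.tsum_sub (hu i) (hv i)
  · exact Finset.sum_congr rfl fun i _ => Summable.tsum_sub (hw i) (hz i)

lemma final_algebra {d : ℕ} (c K : ℕ → ℝ) (I0 : ℝ)
    (hcd : c d = 0) (hKd : K d = 0) :
    (c 0 * K 0 - c 0 * I0)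
      + (∑ i ∈ Finset.range d, (c (i + 1) * K (i + 1) - c (i + 1) * K i))
      + (∑ i ∈ Finset.range d, ((c i - c (i + 1)) * I0 - (c i - c (i + 1)) * K i)) = 0 := by
  have h1 : ∀ i ∈ Finset.range d,
      (c (i + 1) * K (i + 1) - c (i + 1) * K i)
        + ((c i - c (i + 1)) * I0 - (c i - c (i + 1)) * K i)
      = (c (i + 1) * K (i + 1) - c i * K i) + (c i * I0 - c (i + 1) * I0) :=
    fun i _ => by ring
  rw [add_assoc, ← Finset.sum_add_distrib, Finset.sum_congr rfl h1,
    Finset.sum_add_distrib, Finset.sum_range_sub (fun k => c k * K k),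
    Finset.sum_range_sub' (fun k => c k * I0), hcd, hKd]
  ring

end Stmt14Aux

open Stmt14Aux

/-- the product Poisson measure with means `pᵢ x₀` is stationary for the
generator of the fast linear chain: for every bounded `ψ`, `∑_x Ā_{x₀}ψ(x) f̄(x)`
converges absolutely and equals `0`. -/
theorem stmt14
    (d : ℕ) [NeZero d] (f g : ℕ → ℝ) (x0 : ℝ)
    (hf : ∀ j, j ≤ d - 1 → 0 ≤ f j) (hfd : f d = 0)
    (hg : ∀ i, 1 ≤ i → i ≤ d → 0 ≤ g i)
    (hfg : ∀ i, 1 ≤ i → i ≤ d → 0 < f i + g i)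
    (hx0 : 0 < x0)
    (p : Fin d → ℝ)
    (hp : ∀ i : Fin d, p i = ∏ j ∈ Finset.range ((i : ℕ) + 1),
      f j / (f (j + 1) + g (j + 1))) :
    ∀ ψ : (Fin d → ℕ) → ℝ, (∃ C : ℝ, ∀ x, |ψ x| ≤ C) →
      Summable (fun x : Fin d → ℕ => genApply f g (f 0) x0 ψ x * poissonProd p x0 x) ∧
      ∑' x : Fin d → ℕ, genApply f g (f 0) x0 ψ x * poissonProd p x0 x = 0 := by
  intro ψ hψ
  obtain ⟨C, hC⟩ := hψ
  have hd : 0 < d := Nat.pos_of_ne_zero (NeZero.ne d)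
  -- nonnegativity of the means
  have hp0 : ∀ i : Fin d, 0 ≤ p i := by
    intro i
    have hi := i.isLt
    rw [hp i]
    refine Finset.prod_nonneg fun j hj => ?_
    rw [Finset.mem_range] at hj
    exact div_nonneg (hf j (by omega)) (le_of_lt (hfg (j + 1) (by omega) (by omega)))
  have hl0 : ∀ i : Fin d, 0 ≤ p i * x0 := fun i => mul_nonneg (hp0 i) hx0.le
  -- basic summability
  have Smu : Summable (poissonProd p x0) := by
    have := summable_pi_prod (fun j => pf (p j * x0)) (fun j n => pf_nonneg (hl0 j) n)
      (fun j => pf_summable _)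
    exact this.congr fun x => (poissonProd_eq p x0 x).symm
  have hmu0 : ∀ x, 0 ≤ poissonProd p x0 x := by
    intro x
    rw [poissonProd_eq]
    exact Finset.prod_nonneg fun j _ => pf_nonneg (hl0 j) _
  have SmuF : ∀ F : (Fin d → ℕ) → ℝ, (∀ x, |F x| ≤ C) →
      Summable (fun x => poissonProd p x0 x * F x) :=
    fun F hF => summable_bdd_mul Smu hmu0 hF
  have Sxi : ∀ i : Fin d, Summable (fun x : Fin d → ℕ => (x i : ℝ) * poissonProd p x0 x) := by
    intro i
    have h1 : Summable (fun y : Fin d → ℕ => poissonProd p x0 y * (fun _ => (1:ℝ)) y) :=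
      Smu.mul_right 1
    have := (transfer p x0 i (fun _ => (1:ℝ)) h1).1
    exact this.congr fun x => by simp
  have SxiF : ∀ (i : Fin d) (F : (Fin d → ℕ) → ℝ), (∀ x, |F x| ≤ C) →
      Summable (fun x : Fin d → ℕ => (x i : ℝ) * poissonProd p x0 x * F x) :=
    fun i F hF => summable_bdd_mul (Sxi i)
      (fun x => mul_nonneg (Nat.cast_nonneg _) (hmu0 x)) hF
  -- the named constants
  obtain ⟨I0, hI0⟩ : ∃ r : ℝ, r = ∑' y : Fin d → ℕ, poissonProd p x0 y * ψ y := ⟨_, rfl⟩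
  obtain ⟨K, hK, hKd⟩ : ∃ K : ℕ → ℝ,
      (∀ (k : ℕ) (h : k < d),
        K k = ∑' y : Fin d → ℕ, poissonProd p x0 y * ψ (addOne y ⟨k, h⟩)) ∧
      (∀ k, d ≤ k → K k = 0) := by
    refine ⟨fun k => if h : k < d then
      ∑' y : Fin d → ℕ, poissonProd p x0 y * ψ (addOne y ⟨k, h⟩) else 0, ?_, ?_⟩
    · intro k h; exact dif_pos h
    · intro k h; exact dif_neg (by omega)
  obtain ⟨c, hc⟩ : ∃ c : ℕ → ℝ,
      ∀ k, c k = f k * (∏ j ∈ Finset.range k, f j / (f (j + 1) + g (j + 1))) * x0 :=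
    ⟨_, fun k => rfl⟩
  have hc0 : c 0 = f 0 * x0 := by rw [hc]; simp
  have hcd : c d = 0 := by rw [hc, hfd]; ring
  -- flow identities
  have hfc : ∀ i : Fin d, f ((i : ℕ) + 1) * (p i * x0) = c ((i : ℕ) + 1) := by
    intro i
    rw [hc, hp i]
    ring
  have hfgc : ∀ i : Fin d, (f ((i : ℕ) + 1) + g ((i : ℕ) + 1)) * (p i * x0) = c (i : ℕ) := by
    intro i
    have hi := i.isLt
    have hne : f ((i : ℕ) + 1) + g ((i : ℕ) + 1) ≠ 0 := (hfg ((i : ℕ) + 1) (by omega) (by omega)).ne'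
    have hP : (∏ j ∈ Finset.range (i : ℕ), (f (j + 1) + g (j + 1))) ≠ 0 := by
      refine Finset.prod_ne_zero_iff.2 fun j hj => ?_
      rw [Finset.mem_range] at hj
      exact (hfg (j + 1) (by omega) (by omega)).ne'
    rw [hc, hp i, Finset.prod_range_succ]
    field_simp
  have hflow : ∀ i : Fin d, g ((i : ℕ) + 1) * (p i * x0) = c (i : ℕ) - c ((i : ℕ) + 1) := by
    intro i
    have h1 := hfc i
    have h2 := hfgc i
    nlinarith [h1, h2]
  -- core tsum computations
  have hT0 : ∀ i : Fin d,
      ∑' x : Fin d → ℕ, (x i : ℝ) * poissonProd p x0 x * ψ (removeOne x i)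
        = (p i * x0) * I0 := by
    intro i
    rw [(transfer p x0 i ψ (SmuF ψ hC)).2, ← hI0]
  have hT1 : ∀ i : Fin d,
      ∑' x : Fin d → ℕ, (x i : ℝ) * poissonProd p x0 x * ψ x
        = (p i * x0) * K (i : ℕ) := by
    intro i
    have heq : ∀ x : Fin d → ℕ, (x i : ℝ) * poissonProd p x0 x * ψ x
        = (x i : ℝ) * poissonProd p x0 x * ψ (addOne (removeOne x i) i) := by
      intro x
      rcases Nat.eq_zero_or_pos (x i) with h | h
      · simp [h]
      · rw [addOne_removeOne x i (by omega)]
    have ht := (transfer p x0 i (fun z => ψ (addOne z i)) (SmuF _ fun x => hC _)).2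
    beta_reduce at ht
    rw [tsum_congr heq, ht, hK (i : ℕ) i.isLt]
  have hT2 : ∀ i : Fin d,
      f ((i : ℕ) + 1) * ∑' x : Fin d → ℕ, (x i : ℝ) * poissonProd p x0 x * ψ (moveOne x i)
        = c ((i : ℕ) + 1) * K ((i : ℕ) + 1) := by
    intro i
    by_cases hlt : (i : ℕ) + 1 < d
    · have heq : ∀ x : Fin d → ℕ, (x i : ℝ) * poissonProd p x0 x * ψ (moveOne x i)
          = (x i : ℝ) * poissonProd p x0 x * ψ (addOne (removeOne x i) ⟨(i : ℕ) + 1, hlt⟩) := by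
        intro x
        simp only [moveOne, dif_pos hlt]
      have ht := (transfer p x0 i (fun z => ψ (addOne z ⟨(i : ℕ) + 1, hlt⟩))
        (SmuF _ fun x => hC _)).2
      beta_reduce at ht
      rw [tsum_congr heq, ht, hK ((i : ℕ) + 1) hlt, ← hfc i]
      ring
    · have hi1 : (i : ℕ) + 1 = d := by have := i.isLt; omega
      rw [hi1, hfd, hKd d le_rfl]
      ring
  -- pointwise expansion of the summand
  have hGx : ∀ x : Fin d → ℕ, genApply f g (f 0) x0 ψ x * poissonProd p x0 x
      = ((f 0 * x0 * (poissonProd p x0 x * ψ (addOne x 0))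
            - f 0 * x0 * (poissonProd p x0 x * ψ x))
        + (∑ i : Fin d, (f ((i : ℕ) + 1) * ((x i : ℝ) * poissonProd p x0 x * ψ (moveOne x i))
            - f ((i : ℕ) + 1) * ((x i : ℝ) * poissonProd p x0 x * ψ x)))
        + (∑ i : Fin d, (g ((i : ℕ) + 1) * ((x i : ℝ) * poissonProd p x0 x * ψ (removeOne x i))
            - g ((i : ℕ) + 1) * ((x i : ℝ) * poissonProd p x0 x * ψ x)))) := by
    intro x
    simp only [genApply]
    rw [add_mul, add_mul, Finset.sum_mul, Finset.sum_mul]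
    congr 1
    · congr 1
      · ring
      · exact Finset.sum_congr rfl fun i _ => by ring
    · exact Finset.sum_congr rfl fun i _ => by ring
  -- summability of all the pieces
  have Sa : Summable (fun x : Fin d → ℕ => f 0 * x0 * (poissonProd p x0 x * ψ (addOne x 0))) :=
    (SmuF _ fun x => hC _).mul_left _
  have Sb : Summable (fun x : Fin d → ℕ => f 0 * x0 * (poissonProd p x0 x * ψ x)) :=
    (SmuF ψ hC).mul_left _
  have Su : ∀ i : Fin d, Summable (fun x : Fin d → ℕ =>
      f ((i : ℕ) + 1) * ((x i : ℝ) * poissonProd p x0 x * ψ (moveOne x i))) :=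
    fun i => (SxiF i _ fun x => hC _).mul_left _
  have Sv : ∀ i : Fin d, Summable (fun x : Fin d → ℕ =>
      f ((i : ℕ) + 1) * ((x i : ℝ) * poissonProd p x0 x * ψ x)) :=
    fun i => (SxiF i ψ hC).mul_left _
  have Sw : ∀ i : Fin d, Summable (fun x : Fin d → ℕ =>
      g ((i : ℕ) + 1) * ((x i : ℝ) * poissonProd p x0 x * ψ (removeOne x i))) :=
    fun i => (SxiF i _ fun x => hC _).mul_left _
  have Sz : ∀ i : Fin d, Summable (fun x : Fin d → ℕ =>
      g ((i : ℕ) + 1) * ((x i : ℝ) * poissonProd p x0 x * ψ x)) :=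
    fun i => (SxiF i ψ hC).mul_left _
  have hstruct := tsum_structure
    (fun x : Fin d → ℕ => f 0 * x0 * (poissonProd p x0 x * ψ (addOne x 0)))
    (fun x : Fin d → ℕ => f 0 * x0 * (poissonProd p x0 x * ψ x))
    (fun (i : Fin d) (x : Fin d → ℕ) =>
      f ((i : ℕ) + 1) * ((x i : ℝ) * poissonProd p x0 x * ψ (moveOne x i)))
    (fun (i : Fin d) (x : Fin d → ℕ) =>
      f ((i : ℕ) + 1) * ((x i : ℝ) * poissonProd p x0 x * ψ x))
    (fun (i : Fin d) (x : Fin d → ℕ) =>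
      g ((i : ℕ) + 1) * ((x i : ℝ) * poissonProd p x0 x * ψ (removeOne x i)))
    (fun (i : Fin d) (x : Fin d → ℕ) =>
      g ((i : ℕ) + 1) * ((x i : ℝ) * poissonProd p x0 x * ψ x))
    Sa Sb Su Sv Sw Sz
  constructor
  · exact hstruct.1.congr fun x => (hGx x).symm
  · -- evaluate all the tsums
    have hA1 : ∑' x : Fin d → ℕ, f 0 * x0 * (poissonProd p x0 x * ψ (addOne x 0))
        = c 0 * K 0 := by
      have h0fin : (⟨0, hd⟩ : Fin d) = 0 := Fin.ext (by simp)
      rw [tsum_mul_left, hK 0 hd, h0fin, hc0]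
    have hB1 : ∑' x : Fin d → ℕ, f 0 * x0 * (poissonProd p x0 x * ψ x) = c 0 * I0 := by
      rw [tsum_mul_left, ← hI0, hc0]
    have hA2 : ∀ i : Fin d, ∑' x : Fin d → ℕ,
        f ((i : ℕ) + 1) * ((x i : ℝ) * poissonProd p x0 x * ψ (moveOne x i))
          = c ((i : ℕ) + 1) * K ((i : ℕ) + 1) := by
      intro i
      rw [tsum_mul_left, hT2 i]
    have hB2 : ∀ i : Fin d, ∑' x : Fin d → ℕ,
        f ((i : ℕ) + 1) * ((x i : ℝ) * poissonProd p x0 x * ψ x)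
          = c ((i : ℕ) + 1) * K (i : ℕ) := by
      intro i
      rw [tsum_mul_left, hT1 i, ← mul_assoc, hfc i]
    have hA3 : ∀ i : Fin d, ∑' x : Fin d → ℕ,
        g ((i : ℕ) + 1) * ((x i : ℝ) * poissonProd p x0 x * ψ (removeOne x i))
          = (c (i : ℕ) - c ((i : ℕ) + 1)) * I0 := by
      intro i
      rw [tsum_mul_left, hT0 i, ← mul_assoc, hflow i]
    have hB3 : ∀ i : Fin d, ∑' x : Fin d → ℕ,
        g ((i : ℕ) + 1) * ((x i : ℝ) * poissonProd p x0 x * ψ x)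
          = (c (i : ℕ) - c ((i : ℕ) + 1)) * K (i : ℕ) := by
      intro i
      rw [tsum_mul_left, hT1 i, ← mul_assoc, hflow i]
    calc ∑' x : Fin d → ℕ, genApply f g (f 0) x0 ψ x * poissonProd p x0 x
        = _ := tsum_congr hGx
      _ = _ := hstruct.2
      _ = (c 0 * K 0 - c 0 * I0)
            + (∑ i ∈ Finset.range d, (c (i + 1) * K (i + 1) - c (i + 1) * K i))
            + (∑ i ∈ Finset.range d, ((c i - c (i + 1)) * I0 - (c i - c (i + 1)) * K i)) := by
          rw [hA1, hB1]
          congr 1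
          · congr 1
            rw [← Fin.sum_univ_eq_sum_range
              (fun k => c (k + 1) * K (k + 1) - c (k + 1) * K k) d]
            exact Finset.sum_congr rfl fun i _ => by rw [hA2 i, hB2 i]
          · rw [← Fin.sum_univ_eq_sum_range
              (fun k => (c k - c (k + 1)) * I0 - (c k - c (k + 1)) * K k) d]
            exact Finset.sum_congr rfl fun i _ => by rw [hA3 i, hB3 i]
      _ = 0 := final_algebra c K I0 hcd (hKd d le_rfl)
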